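/- arXiv:1112.3776 — 3 statements merged into one kernel-verified Lean document; each statement's English description precedes it below -/
import Mathlib

section
/- If N is a standard normal random variable and E is an exponential random variable with rate 2 (density 2e^{-2x} for x>0) independent of N, then √E · |N| has the same distribution as E. -/
open MeasureTheory ProbabilityTheory

/-- The exponential distribution with rate 2 (density `2 * exp (-2x)` for `x > 0`). -/
noncomputable def expTwo : Measure ℝ :=
  volume.withDensity (ProbabilityTheory.exponentialPDF 2)

section Aux

open Real Set

lemma glasser {b : ℝ} (hb : 0 < b) :
    ∫ x in Ioi (0:ℝ), rexp (-((x - b/x)^2)) = Real.sqrt π / 2 := by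
  set f : ℝ → ℝ := fun x => x - b/x with hf
  set g : ℝ → ℝ := fun u => rexp (-(u^2)) with hg
  have hderiv : ∀ x ∈ Ioi (0:ℝ), HasDerivWithinAt f (1 + b/x^2) (Ioi 0) x := by
    intro x hx
    have hx0 : x ≠ 0 := ne_of_gt hx
    have h1 : HasDerivAt (fun x : ℝ => b / x) (-(b / x^2)) x := by
      have := (hasDerivAt_inv hx0).const_mul b
      simpa [div_eq_mul_inv, neg_mul, mul_neg] using this
    have h2 : HasDerivAt f (1 - -(b/x^2)) x := (hasDerivAt_id x).sub h1
    have : (1 : ℝ) - -(b/x^2) = 1 + b/x^2 := by ring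
    exact (this ▸ h2).hasDerivWithinAt
  have hmono : StrictMonoOn f (Ioi 0) := by
    intro x hx y hy hxy
    have : b / y < b / x := div_lt_div_of_pos_left hb hx hxy
    simp only [hf]
    linarith
  have hinj : InjOn f (Ioi 0) := hmono.injOn
  have himg : f '' Ioi 0 = univ := by
    apply eq_univ_of_forall
    intro u
    have hD : (0:ℝ) < u^2 + 4*b := by positivity
    set D := u^2 + 4*b with hDdef
    have hsD : Real.sqrt D ^ 2 = D := Real.sq_sqrt hD.le
    have habs : |u| < Real.sqrt D := by
      rw [show |u| = Real.sqrt (u^2) by rw [Real.sqrt_sq_eq_abs]]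
      apply Real.sqrt_lt_sqrt (sq_nonneg u); linarith
    have hx0 : (0:ℝ) < (u + Real.sqrt D)/2 := by
      have := neg_abs_le u; linarith
    refine ⟨(u + Real.sqrt D)/2, hx0, ?_⟩
    have hsum : u + Real.sqrt D ≠ 0 := by intro h; rw [h] at hx0; norm_num at hx0
    show (u + Real.sqrt D)/2 - b / ((u + Real.sqrt D)/2) = u
    field_simp
    nlinarith [hsD]
  -- integrability of the basic integrand
  have hmeas : Measurable fun x : ℝ => rexp (-((x - b/x)^2)) := by
    fun_prop
  have hbound : ∀ x ∈ Ioi (0:ℝ), rexp (-((x - b/x)^2)) ≤ rexp (2*b) * rexp (-(1:ℝ)*x^2) := by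
    intro x hx
    rw [← Real.exp_add]
    apply Real.exp_le_exp.mpr
    have hx0 : x ≠ 0 := ne_of_gt hx
    have : (x - b/x)^2 = x^2 - 2*b + (b/x)^2 := by field_simp; ring
    nlinarith [sq_nonneg (b/x)]
  have hint1 : IntegrableOn (fun x => rexp (-((x - b/x)^2))) (Ioi 0) := by
    apply Integrable.mono (((integrable_exp_neg_mul_sq one_pos).const_mul (rexp (2*b))).restrict (s := Ioi 0))
    · exact hmeas.aestronglyMeasurable
    · filter_upwards [ae_restrict_mem measurableSet_Ioi] with x hx
      rw [norm_of_nonneg (Real.exp_nonneg _), norm_of_nonneg (by positivity)]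
      exact hbound x hx
  -- the change of variables for f
  have key : ∫ u : ℝ, g u = ∫ x in Ioi (0:ℝ), |1 + b/x^2| • g (f x) := by
    rw [← MeasureTheory.setIntegral_univ, ← himg]
    exact integral_image_eq_integral_abs_deriv_smul measurableSet_Ioi hderiv hinj g
  have hgauss : ∫ u : ℝ, g u = Real.sqrt π := by
    simp only [hg]
    have := integral_gaussian 1
    simpa [neg_mul, one_mul] using this
  -- integrability of full integrand
  have hintfull : IntegrableOn (fun x => |1 + b/x^2| • g (f x)) (Ioi 0) := by
    rw [← integrableOn_image_iff_integrableOn_abs_deriv_smul measurableSet_Ioi hderiv hinj g, himg]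
    have h1 : Integrable (fun u : ℝ => rexp (-(u^2))) := by
      simpa [neg_mul] using integrable_exp_neg_mul_sq (b := 1) one_pos
    exact h1.integrableOn
  -- second substitution: x ↦ b / x
  have hderiv2 : ∀ x ∈ Ioi (0:ℝ), HasDerivWithinAt (fun x : ℝ => b / x) (-(b / x^2)) (Ioi 0) x := by
    intro x hx
    have hx0 : x ≠ 0 := ne_of_gt hx
    have h1 : HasDerivAt (fun x : ℝ => b / x) (-(b / x^2)) x := by
      have := (hasDerivAt_inv hx0).const_mul b
      simpa [div_eq_mul_inv, neg_mul, mul_neg] using this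
    exact h1.hasDerivWithinAt
  have hinj2 : InjOn (fun x : ℝ => b / x) (Ioi 0) := by
    intro x hx y hy h
    have hx0 : x ≠ 0 := ne_of_gt hx
    have hy0 : y ≠ 0 := ne_of_gt hy
    field_simp at h
    exact h.symm
  have himg2 : (fun x : ℝ => b / x) '' Ioi 0 = Ioi 0 := by
    apply Subset.antisymm
    · rintro _ ⟨x, hx, rfl⟩
      exact div_pos hb hx
    · intro y hy
      exact ⟨b / y, div_pos hb hy, by field_simp⟩
  have sub2 : ∫ x in Ioi (0:ℝ), rexp (-((x - b/x)^2))
      = ∫ x in Ioi (0:ℝ), (b/x^2) * rexp (-((x - b/x)^2)) := by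
    conv_lhs => rw [← himg2]
    rw [integral_image_eq_integral_abs_deriv_smul measurableSet_Ioi hderiv2 hinj2
      (fun u => rexp (-((u - b/u)^2)))]
    apply setIntegral_congr_fun measurableSet_Ioi
    intro x hx
    have hx0 : x ≠ 0 := ne_of_gt hx
    have hbx : b / (b/x) = x := by field_simp
    have habs : |(-(b / x^2))| = b/x^2 := by
      rw [abs_neg, abs_of_pos (by positivity)]
    simp only [smul_eq_mul]
    rw [habs, hbx]
    congr 2
    ring
  -- integrability of the (b/x^2) part
  have hint2 : IntegrableOn (fun x => (b/x^2) * rexp (-((x - b/x)^2))) (Ioi 0) := by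
    have heq : EqOn (fun x => (b/x^2) * rexp (-((x - b/x)^2)))
        (fun x => |1 + b/x^2| • g (f x) - rexp (-((x - b/x)^2))) (Ioi 0) := by
      intro x hx
      have : |1 + b/x^2| = 1 + b/x^2 := abs_of_pos (by positivity)
      simp only [hg, hf, smul_eq_mul, this]
      ring
    exact MeasureTheory.IntegrableOn.congr_fun (hintfull.sub hint1)
      (fun x hx => (heq hx).symm) measurableSet_Ioi
  -- combine
  have hsplit : ∫ x in Ioi (0:ℝ), |1 + b/x^2| • g (f x)
      = (∫ x in Ioi (0:ℝ), rexp (-((x - b/x)^2)))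
        + ∫ x in Ioi (0:ℝ), (b/x^2) * rexp (-((x - b/x)^2)) := by
    rw [← integral_add hint1 hint2]
    apply setIntegral_congr_fun measurableSet_Ioi
    intro x hx
    have : |1 + b/x^2| = 1 + b/x^2 := abs_of_pos (by positivity)
    simp only [hg, hf, smul_eq_mul, this]
    ring
  have : Real.sqrt π = 2 * ∫ x in Ioi (0:ℝ), rexp (-((x - b/x)^2)) := by
    rw [← hgauss, key, hsplit, ← sub2]; ring
  linarith

lemma keyK {b : ℝ} (hb : 0 ≤ b) :
    ∫ x in Ioi (0:ℝ), rexp (-(x^2 + b^2/x^2)) = Real.sqrt π / 2 * rexp (-(2*b)) := by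
  rcases eq_or_lt_of_le hb with rfl | hb
  · have := integral_gaussian_Ioi 1
    simp only [neg_mul, one_mul, div_one] at this
    simp only [ne_eq, OfNat.ofNat_ne_zero, not_false_iff, zero_pow, zero_div, add_zero,
      mul_zero, neg_zero, Real.exp_zero, mul_one]
    exact this
  · have : ∫ x in Ioi (0:ℝ), rexp (-(x^2 + b^2/x^2))
        = ∫ x in Ioi (0:ℝ), rexp (-((x - b/x)^2)) * rexp (-(2*b)) := by
      apply setIntegral_congr_fun measurableSet_Ioi
      intro x hx
      have hx0 : x ≠ 0 := ne_of_gt hx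
      dsimp only
      rw [← Real.exp_add]
      congr 1
      field_simp
      ring
    rw [this, integral_mul_const, glasser hb]

lemma keyL {t : ℝ} (ht : 0 ≤ t) :
    ∫ x : ℝ, ProbabilityTheory.gaussianPDFReal 0 1 x * rexp (-(2*(t/|x|)^2))
      = rexp (-(2*t)) := by
  have hrw : (fun x : ℝ => ProbabilityTheory.gaussianPDFReal 0 1 x * rexp (-(2*(t/|x|)^2)))
      = fun x => (Real.sqrt (2*π))⁻¹ * (rexp (-(|x|^2/2)) * rexp (-(2*(t/|x|)^2))) := by
    funext x
    rw [ProbabilityTheory.gaussianPDFReal]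
    rw [sq_abs]
    push_cast
    ring_nf
  rw [hrw]
  rw [integral_const_mul]
  rw [integral_comp_abs (f := fun y => rexp (-(y^2/2)) * rexp (-(2*(t/y)^2)))]
  have hsub : ∫ x in Ioi (0:ℝ), rexp (-(x^2/2)) * rexp (-(2*(t/x)^2))
      = Real.sqrt 2 * ∫ u in Ioi (0:ℝ), rexp (-(u^2 + t^2/u^2)) := by
    have h2 : (0:ℝ) < Real.sqrt 2 := by positivity
    have := integral_comp_mul_left_Ioi
      (fun x => rexp (-(x^2/2)) * rexp (-(2*(t/x)^2))) 0 h2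
    rw [mul_zero] at this
    have heq : ∀ u ∈ Ioi (0:ℝ),
        rexp (-((Real.sqrt 2 * u)^2/2)) * rexp (-(2*(t/(Real.sqrt 2 * u))^2))
          = rexp (-(u^2 + t^2/u^2)) := by
      intro u hu
      have hu0 : u ≠ 0 := ne_of_gt hu
      have hs2 : Real.sqrt 2 ^ 2 = 2 := Real.sq_sqrt (by norm_num)
      rw [← Real.exp_add]
      congr 1
      have e1 : (Real.sqrt 2 * u)^2 = 2*u^2 := by rw [mul_pow, hs2]
      rw [div_pow, e1]
      field_simp
      ring
    rw [setIntegral_congr_fun measurableSet_Ioi heq] at this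
    rw [this]
    rw [smul_eq_mul, ← mul_assoc, mul_inv_cancel₀ (by positivity), one_mul]
  rw [hsub, keyK ht]
  have hsq : Real.sqrt (2*π) = Real.sqrt 2 * Real.sqrt π := Real.sqrt_mul (by norm_num) π
  rw [hsq]
  have h1 : Real.sqrt 2 ≠ 0 := by positivity
  have h2 : Real.sqrt π ≠ 0 := by positivity
  field_simp

lemma expTwo_eq : expTwo = expMeasure 2 := rfl

instance : IsProbabilityMeasure expTwo :=
  expTwo_eq ▸ isProbabilityMeasure_expMeasure two_pos

lemma expTwo_Iic (a : ℝ) :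
    expTwo (Iic a) = ENNReal.ofReal (if 0 ≤ a then 1 - rexp (-(2*a)) else 0) := by
  rw [expTwo, withDensity_apply _ measurableSet_Iic]
  exact lintegral_exponentialPDF_eq_antiDeriv two_pos a

lemma hg_meas : Measurable (fun p : ℝ × ℝ => Real.sqrt p.2 * |p.1|) :=
  (Real.continuous_sqrt.measurable.comp measurable_snd).mul measurable_fst.abs

lemma mainMap :
    ((gaussianReal 0 1).prod expTwo).map (fun p : ℝ × ℝ => Real.sqrt p.2 * |p.1|) = expTwo := by
  have : IsProbabilityMeasure (((gaussianReal 0 1).prod expTwo).map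
      (fun p : ℝ × ℝ => Real.sqrt p.2 * |p.1|)) := Measure.isProbabilityMeasure_map hg_meas.aemeasurable
  apply Measure.ext_of_Iic
  intro a
  rw [Measure.map_apply hg_meas measurableSet_Iic, expTwo_Iic]
  rw [Measure.prod_apply (hg_meas measurableSet_Iic)]
  rcases lt_or_ge a 0 with ha | ha
  · rw [if_neg (not_le.mpr ha), ENNReal.ofReal_zero]
    have hempty : ∀ x : ℝ, (Prod.mk x ⁻¹' ((fun p : ℝ × ℝ => Real.sqrt p.2 * |p.1|) ⁻¹' Iic a))
        = (∅ : Set ℝ) := by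
      intro x
      ext y
      simp only [mem_preimage, mem_Iic, mem_empty_iff_false, iff_false, not_le]
      calc a < 0 := ha
        _ ≤ Real.sqrt y * |x| := by positivity
    simp [hempty]
  · rw [if_pos ha]
    -- a.e. rewrite of inner measure
    have hae : ∀ᵐ x ∂(gaussianReal 0 1), x ≠ 0 := by
      have h0 : (gaussianReal 0 1) {(0:ℝ)} = 0 :=
        gaussianReal_absolutelyContinuous 0 one_ne_zero (volume_singleton)
      rw [ae_iff]
      simpa using h0
    have hinner : ∀ x : ℝ, x ≠ 0 →
        expTwo (Prod.mk x ⁻¹' ((fun p : ℝ × ℝ => Real.sqrt p.2 * |p.1|) ⁻¹' Iic a))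
          = ENNReal.ofReal (1 - rexp (-(2*(a/|x|)^2))) := by
      intro x hx
      have habs : 0 < |x| := abs_pos.mpr hx
      have hset : (Prod.mk x ⁻¹' ((fun p : ℝ × ℝ => Real.sqrt p.2 * |p.1|) ⁻¹' Iic a))
          = Iic ((a/|x|)^2) := by
        ext y
        simp only [mem_preimage, mem_Iic]
        rw [show Real.sqrt y * |x| ≤ a ↔ Real.sqrt y ≤ a / |x| from (le_div_iff₀ habs).symm]
        rw [Real.sqrt_le_left (by positivity)]
      rw [hset, expTwo_Iic, if_pos (by positivity)]
    rw [lintegral_congr_ae (hae.mono fun x hx => hinner x hx)]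
    -- split the subtraction
    have hsub1 : ∀ x : ℝ, ENNReal.ofReal (1 - rexp (-(2*(a/|x|)^2)))
        = 1 - ENNReal.ofReal (rexp (-(2*(a/|x|)^2))) := by
      intro x
      rw [ENNReal.ofReal_sub _ (Real.exp_nonneg _), ENNReal.ofReal_one]
    simp_rw [hsub1]
    have hle : ∀ x : ℝ, ENNReal.ofReal (rexp (-(2*(a/|x|)^2))) ≤ 1 := by
      intro x
      rw [← ENNReal.ofReal_one]
      exact ENNReal.ofReal_le_ofReal (Real.exp_le_one_iff.mpr (by positivity |> neg_nonpos_of_nonneg))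
    have hmeas : Measurable fun x : ℝ => ENNReal.ofReal (rexp (-(2*(a/|x|)^2))) := by
      fun_prop
    have hfin : ∫⁻ x, ENNReal.ofReal (rexp (-(2*(a/|x|)^2))) ∂(gaussianReal 0 1) ≠ ⊤ := by
      refine ne_of_lt (lt_of_le_of_lt (lintegral_mono hle) ?_)
      rw [lintegral_one, measure_univ]
      exact ENNReal.one_lt_top
    rw [lintegral_sub hmeas hfin (ae_of_all _ fun x => le_trans (hle x) (by simp))]
    rw [lintegral_one, measure_univ]
    have hS : ∫⁻ x, ENNReal.ofReal (rexp (-(2*(a/|x|)^2))) ∂(gaussianReal 0 1)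
        = ENNReal.ofReal (rexp (-(2*a))) := by
      rw [gaussianReal_of_var_ne_zero 0 one_ne_zero]
      rw [lintegral_withDensity_eq_lintegral_mul volume (measurable_gaussianPDF 0 1) hmeas]
      have heq : ∀ x : ℝ, (gaussianPDF 0 1 * fun x => ENNReal.ofReal (rexp (-(2*(a/|x|)^2)))) x
          = ENNReal.ofReal (gaussianPDFReal 0 1 x * rexp (-(2*(a/|x|)^2))) := by
        intro x
        simp only [Pi.mul_apply, gaussianPDF]
        rw [← ENNReal.ofReal_mul (gaussianPDFReal_nonneg 0 1 x)]
      simp_rw [heq]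
      rw [← MeasureTheory.ofReal_integral_eq_lintegral_ofReal, keyL ha]
      · have hint : Integrable (fun x : ℝ => gaussianPDFReal 0 1 x * rexp (-(2*(a/|x|)^2))) := by
          apply Integrable.mono (integrable_gaussianPDFReal 0 1)
          · exact ((measurable_gaussianPDFReal 0 1).mul (by fun_prop)).aestronglyMeasurable
          · apply ae_of_all
            intro x
            rw [norm_of_nonneg (mul_nonneg (gaussianPDFReal_nonneg 0 1 x) (Real.exp_nonneg _)),
              norm_of_nonneg (gaussianPDFReal_nonneg 0 1 x)]
            nth_rewrite 2 [← mul_one (gaussianPDFReal 0 1 x)]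
            exact mul_le_mul_of_nonneg_left
              (Real.exp_le_one_iff.mpr (neg_nonpos_of_nonneg (by positivity)))
              (gaussianPDFReal_nonneg 0 1 x)
        exact hint
      · exact ae_of_all _ fun x => mul_nonneg (gaussianPDFReal_nonneg 0 1 x) (Real.exp_nonneg _)
    rw [hS]
    rw [ENNReal.ofReal_sub _ (Real.exp_nonneg _), ENNReal.ofReal_one]

end Aux

/-- If `N` is standard normal and `E` is exponential with rate 2, independent of `N`,
then `√E * |N|` has the same distribution as `E`. -/
theorem stmt0 {Ω : Type*} [MeasurableSpace Ω] (P : Measure Ω) [IsProbabilityMeasure P]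
    (N E : Ω → ℝ) (hNm : Measurable N) (hEm : Measurable E)
    (hN : P.map N = gaussianReal 0 1)
    (hE : P.map E = expTwo)
    (hindep : IndepFun N E P) :
    IdentDistrib (fun ω => Real.sqrt (E ω) * |N ω|) E P P := by
  have hXm : Measurable (fun ω => Real.sqrt (E ω) * |N ω|) :=
    (Real.continuous_sqrt.measurable.comp hEm).mul hNm.abs
  refine ⟨hXm.aemeasurable, hEm.aemeasurable, ?_⟩
  have hpair : P.map (fun ω => (N ω, E ω)) = (gaussianReal 0 1).prod expTwo := by
    rw [(indepFun_iff_map_prod_eq_prod_map_map hNm.aemeasurable hEm.aemeasurable).mp hindep,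
      hN, hE]
  calc P.map (fun ω => Real.sqrt (E ω) * |N ω|)
      = P.map ((fun p : ℝ × ℝ => Real.sqrt p.2 * |p.1|) ∘ (fun ω => (N ω, E ω))) := rfl
    _ = (P.map (fun ω => (N ω, E ω))).map (fun p : ℝ × ℝ => Real.sqrt p.2 * |p.1|) :=
        (Measure.map_map hg_meas (hNm.prodMk hEm)).symm
    _ = P.map E := by rw [hpair, mainMap, hE]
end

section
/- Let (N_i)_{i≥0} be i.i.d. standard normal random variables. Then the infinite product ∏_{i=0}^∞ |N_i|^{2^{-i}} converges almost surely to a finite, strictly positive limit. -/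
open MeasureTheory ProbabilityTheory Filter ENNReal
open scoped ENNReal

namespace Stmt1Aux

lemma sqrt_two_pi_ge_two : (2:ℝ) ≤ Real.sqrt (2 * Real.pi) := by
  rw [Real.le_sqrt (by norm_num) (by positivity)]
  nlinarith [Real.pi_gt_three]

lemma pdfReal_eq (x : ℝ) :
    gaussianPDFReal 0 1 x = (Real.sqrt (2 * Real.pi))⁻¹ * Real.exp (-(1/2) * x^2) := by
  unfold gaussianPDFReal
  simp only [NNReal.coe_one, mul_one, sub_zero]
  congr 1
  ring

lemma pdfReal_le_half (x : ℝ) : gaussianPDFReal 0 1 x ≤ 1/2 := by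
  rw [pdfReal_eq]
  have h1 : Real.exp (-(1/2) * x ^ 2) ≤ 1 := by
    rw [Real.exp_le_one_iff]; nlinarith [sq_nonneg x]
  have h2 : (Real.sqrt (2 * Real.pi))⁻¹ ≤ 1/2 := by
    rw [show (1:ℝ)/2 = 2⁻¹ by norm_num]
    exact inv_anti₀ (by norm_num) sqrt_two_pi_ge_two
  have h3 : (0:ℝ) < (Real.sqrt (2 * Real.pi))⁻¹ := by positivity
  nlinarith [Real.exp_pos (-(1/2) * x^2)]

lemma pdfReal_le_exp (x : ℝ) : gaussianPDFReal 0 1 x ≤ Real.exp (-(1/2) * x^2) := by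
  rw [pdfReal_eq]
  have h2 : (Real.sqrt (2 * Real.pi))⁻¹ ≤ 1 := by
    rw [inv_le_one_iff₀]; right; linarith [sqrt_two_pi_ge_two]
  nlinarith [Real.exp_pos (-(1/2) * x^2)]

lemma gauss_small {ε : ℝ} (hε : 0 < ε) :
    gaussianReal 0 1 {x | |x| ≤ ε} ≤ ENNReal.ofReal ε := by
  rw [gaussianReal_apply 0 one_ne_zero]
  have hset : {x : ℝ | |x| ≤ ε} = Set.Icc (-ε) ε := by
    ext x; simp [abs_le]
  calc ∫⁻ x in {x | |x| ≤ ε}, gaussianPDF 0 1 x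
      ≤ ∫⁻ _ in {x : ℝ | |x| ≤ ε}, ENNReal.ofReal (1/2) := by
        apply setLIntegral_mono measurable_const
        intro x _
        exact ENNReal.ofReal_le_ofReal (pdfReal_le_half x)
    _ = ENNReal.ofReal (1/2) * volume {x : ℝ | |x| ≤ ε} := by
        rw [setLIntegral_const]
    _ ≤ ENNReal.ofReal ε := by
        rw [hset, Real.volume_Icc, ← ENNReal.ofReal_mul (by norm_num)]
        apply ENNReal.ofReal_le_ofReal
        nlinarith

noncomputable def Cg : ℝ≥0∞ := ∫⁻ x, ENNReal.ofReal |x| ∂(gaussianReal 0 1)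

lemma Cg_ne_top : Cg ≠ ∞ := by
  have hint : Integrable (fun x : ℝ => x * Real.exp (-(1/2) * x^2)) := by
    have := integrable_rpow_mul_exp_neg_mul_sq (b := 1/2) (by norm_num) (s := 1)
      (by norm_num)
    simpa [Real.rpow_one] using this
  have hfin := hint.2
  rw [hasFiniteIntegral_iff_norm] at hfin
  have key : Cg ≤ ∫⁻ x : ℝ, ENNReal.ofReal ‖x * Real.exp (-(1/2) * x^2)‖ := by
    unfold Cg
    rw [gaussianReal_of_var_ne_zero 0 one_ne_zero,
      lintegral_withDensity_eq_lintegral_mul _ (measurable_gaussianPDF 0 1)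
        measurable_abs.ennreal_ofReal]
    apply lintegral_mono
    intro x
    simp only [Pi.mul_apply, norm_mul, Real.norm_eq_abs,
      Real.abs_exp, gaussianPDF]
    rw [← ENNReal.ofReal_mul (gaussianPDFReal_nonneg 0 1 x),
      ENNReal.ofReal_le_ofReal_iff (by positivity)]
    rw [mul_comm]
    exact mul_le_mul_of_nonneg_left (pdfReal_le_exp x) (abs_nonneg x)
  exact (lt_of_le_of_lt key hfin).ne

lemma gauss_tail {t : ℝ} (ht : 0 < t) :
    gaussianReal 0 1 {x | t ≤ |x|} ≤ Cg * ENNReal.ofReal t⁻¹ := by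
  have hmeas : AEMeasurable (fun x : ℝ => ENNReal.ofReal |x|) (gaussianReal 0 1) :=
    measurable_abs.ennreal_ofReal.aemeasurable
  have h := mul_meas_ge_le_lintegral₀ hmeas (ENNReal.ofReal t)
  have hset : {x : ℝ | ENNReal.ofReal t ≤ ENNReal.ofReal |x|} = {x | t ≤ |x|} := by
    ext x
    constructor
    · intro h'; exact (ENNReal.ofReal_le_ofReal_iff (abs_nonneg x)).mp h'
    · intro h'; exact ENNReal.ofReal_le_ofReal h'
  rw [hset] at h
  have htne : ENNReal.ofReal t ≠ 0 := by simp [ht]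
  have httop : ENNReal.ofReal t ≠ ∞ := ENNReal.ofReal_ne_top
  calc gaussianReal 0 1 {x | t ≤ |x|}
      = ENNReal.ofReal t * gaussianReal 0 1 {x | t ≤ |x|} * (ENNReal.ofReal t)⁻¹ := by
        rw [mul_comm (ENNReal.ofReal t), mul_assoc, ENNReal.mul_inv_cancel htne httop, mul_one]
    _ ≤ Cg * (ENNReal.ofReal t)⁻¹ := by gcongr; exact h
    _ = Cg * ENNReal.ofReal t⁻¹ := by rw [ENNReal.ofReal_inv_of_pos ht]

end Stmt1Aux

open Stmt1Aux

/-- For i.i.d. standard normal random variables `(N i)`, the partial products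
`∏_{i=0}^{n-1} |N i|^(2^{-i})` converge almost surely to a finite strictly positive limit. -/
theorem stmt1 {Ω : Type*} [MeasurableSpace Ω] (P : Measure Ω) [IsProbabilityMeasure P]
    (N : ℕ → Ω → ℝ) (hm : ∀ i, Measurable (N i))
    (hlaw : ∀ i, P.map (N i) = gaussianReal 0 1)
    (hindep : iIndepFun N P) :
    ∀ᵐ ω ∂P, ∃ l : ℝ, 0 < l ∧
      Tendsto (fun n => ∏ i ∈ Finset.range n, |N i ω| ^ ((2 : ℝ) ^ (-(i : ℝ))))
        atTop (nhds l) := by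
  classical
  -- the bad events
  set S : ℕ → Set ℝ := fun i => {x : ℝ | (i : ℝ) < abs (Real.log (abs x))} with hS
  have hSmeas : ∀ i, MeasurableSet (S i) := by
    intro i
    exact measurableSet_lt measurable_const (Real.measurable_log.comp measurable_abs).abs
  set A : ℕ → Set Ω := fun i => (N i) ⁻¹' (S i) with hA
  -- probability bound for each bad event
  have hbound : ∀ i : ℕ, P (A i) ≤ (1 + Cg) * ENNReal.ofReal (Real.exp (-(i:ℝ))) := by
    intro i
    have hmap : P (A i) = gaussianReal 0 1 (S i) := by
      rw [hA, ← hlaw i, Measure.map_apply (hm i) (hSmeas i)]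
    rw [hmap]
    have hsub : S i ⊆ {x : ℝ | |x| ≤ Real.exp (-(i:ℝ))} ∪ {x : ℝ | Real.exp (i:ℝ) ≤ |x|} := by
      intro x hx
      simp only [hS, Set.mem_setOf_eq] at hx
      by_cases hsmall : |x| ≤ Real.exp (-(i:ℝ))
      · exact Or.inl hsmall
      · right
        push_neg at hsmall
        have hxpos : 0 < |x| := lt_trans (Real.exp_pos _) hsmall
        have hlog : -(i:ℝ) < Real.log |x| := (Real.lt_log_iff_exp_lt hxpos).mpr hsmall
        have hgt : (i:ℝ) < Real.log |x| := by
          rcases abs_cases (Real.log |x|) with ⟨h1, _⟩ | ⟨h1, _⟩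
          · rwa [h1] at hx
          · rw [h1] at hx; linarith
        calc Real.exp (i:ℝ) ≤ Real.exp (Real.log |x|) := Real.exp_le_exp.mpr hgt.le
          _ = |x| := Real.exp_log hxpos
    calc gaussianReal 0 1 (S i)
        ≤ gaussianReal 0 1 ({x : ℝ | |x| ≤ Real.exp (-(i:ℝ))} ∪ {x : ℝ | Real.exp (i:ℝ) ≤ |x|}) :=
          measure_mono hsub
      _ ≤ gaussianReal 0 1 {x : ℝ | |x| ≤ Real.exp (-(i:ℝ))}
          + gaussianReal 0 1 {x : ℝ | Real.exp (i:ℝ) ≤ |x|} := measure_union_le _ _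
      _ ≤ ENNReal.ofReal (Real.exp (-(i:ℝ))) + Cg * ENNReal.ofReal (Real.exp (i:ℝ))⁻¹ := by
          gcongr
          · exact gauss_small (Real.exp_pos _)
          · exact gauss_tail (Real.exp_pos _)
      _ = (1 + Cg) * ENNReal.ofReal (Real.exp (-(i:ℝ))) := by
          rw [← Real.exp_neg]
          ring
  -- summability of the probabilities
  have hsum : (∑' i, P (A i)) ≠ ∞ := by
    have hgeo : (∑' i : ℕ, ENNReal.ofReal (Real.exp (-(i:ℝ)))) ≠ ∞ := by
      have heq : ∀ i : ℕ, ENNReal.ofReal (Real.exp (-(i:ℝ)))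
          = (ENNReal.ofReal (Real.exp (-1)))^i := by
        intro i
        rw [← ENNReal.ofReal_pow (Real.exp_pos _).le, ← Real.exp_nat_mul]
        norm_num
      rw [tsum_congr heq, ENNReal.tsum_geometric]
      simp only [ne_eq, ENNReal.inv_eq_top]
      rw [tsub_eq_zero_iff_le]
      intro hle
      have hlt : ENNReal.ofReal (Real.exp (-1)) < 1 := by
        rw [← ENNReal.ofReal_one]
        exact (ENNReal.ofReal_lt_ofReal_iff (by norm_num)).mpr
          (by rw [Real.exp_lt_one_iff]; norm_num)
      exact absurd hle (not_le.mpr hlt)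
    have hle : (∑' i, P (A i)) ≤ (1 + Cg) * ∑' i : ℕ, ENNReal.ofReal (Real.exp (-(i:ℝ))) := by
      rw [← ENNReal.tsum_mul_left]
      exact ENNReal.tsum_le_tsum hbound
    refine (lt_of_le_of_lt hle (ENNReal.mul_lt_top ?_ hgeo.lt_top)).ne
    exact ENNReal.add_lt_top.mpr ⟨ENNReal.one_lt_top, Cg_ne_top.lt_top⟩
  -- a.e. each N i is nonzero
  have hne : ∀ᵐ ω ∂P, ∀ i, N i ω ≠ 0 := by
    rw [ae_all_iff]
    intro i
    have h0 : P {ω | N i ω = 0} = 0 := by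
      have heq : {ω | N i ω = 0} = (N i) ⁻¹' {0} := rfl
      rw [heq, ← Measure.map_apply (hm i) (measurableSet_singleton 0), hlaw i]
      exact gaussianReal_absolutelyContinuous 0 one_ne_zero (measure_singleton 0)
    simpa [ae_iff] using h0
  filter_upwards [ae_eventually_notMem hsum, hne] with ω hev hω
  -- the log series is summable
  have habs : ∀ᶠ i : ℕ in atTop, ‖(2:ℝ) ^ (-(i:ℝ)) * Real.log |N i ω|‖ ≤ (i:ℝ) * (1/2)^i := by
    filter_upwards [hev] with i hi
    simp only [hA, hS, Set.mem_preimage, Set.mem_setOf_eq, not_lt] at hi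
    have h2 : (2:ℝ) ^ (-(i:ℝ)) = (1/2:ℝ)^i := by
      rw [Real.rpow_neg (by norm_num), one_div, inv_pow]
      congr 1
      exact Real.rpow_natCast 2 i
    rw [norm_mul, Real.norm_eq_abs, Real.norm_eq_abs, abs_of_pos (Real.rpow_pos_of_pos two_pos _),
      h2, mul_comm]
    exact mul_le_mul_of_nonneg_right hi (by positivity)
  have hsummable : Summable (fun i : ℕ => (2:ℝ) ^ (-(i:ℝ)) * Real.log |N i ω|) := by
    apply Summable.of_norm_bounded_eventually_nat (g := fun i => (i:ℝ) * (1/2)^i) _ habs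
    have h := summable_pow_mul_geometric_of_norm_lt_one (R := ℝ) 1 (r := 1/2)
      (by rw [Real.norm_eq_abs, abs_of_pos] <;> norm_num)
    simpa using h
  refine ⟨Real.exp (∑' i : ℕ, (2:ℝ) ^ (-(i:ℝ)) * Real.log |N i ω|), Real.exp_pos _, ?_⟩
  have hprod : ∀ n, ∏ i ∈ Finset.range n, |N i ω| ^ ((2 : ℝ) ^ (-(i : ℝ)))
      = Real.exp (∑ i ∈ Finset.range n, (2:ℝ) ^ (-(i:ℝ)) * Real.log |N i ω|) := by
    intro n
    rw [Real.exp_sum]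
    apply Finset.prod_congr rfl
    intro i _
    rw [Real.rpow_def_of_pos (abs_pos.mpr (hω i)), mul_comm]
  simp only [hprod]
  exact (Real.continuous_exp.tendsto _).comp hsummable.hasSum.tendsto_sum_nat
end

section
/- Let B be a Brownian motion on [0,1] and D = osc(B;[0,1]) = sup_{s,t∈[0,1]}|B(t)−B(s)| its oscillation. Let D₁, D₂, … be i.i.d. copies of D. Then the infinite product ∏_{i=1}^∞ D_i^{2^{-(i-1)}} converges almost surely in (0,∞). -/
open MeasureTheory ProbabilityTheory

open Real Filter
open scoped NNReal ENNReal


lemma texp_sq (t : ℝ) (ht : 0 ≤ t) : t^2 ≤ 4 * Real.exp t := by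
  have h1 : 1 + t/2 ≤ Real.exp (t/2) := by
    have := Real.add_one_le_exp (t/2); linarith
  have h2 : (t/2)^2 ≤ (1 + t/2)^2 := by nlinarith
  have h3 : Real.exp t = (Real.exp (t/2))^2 := by
    rw [sq, ← Real.exp_add]; ring_nf
  nlinarith [Real.exp_pos (t/2)]

-- key pointwise bound
lemma x4_exp_bound (v x : ℝ) (hv : 0 < v) :
    x^4 * Real.exp (-x^2 / (2*v)) ≤ 64 * v^2 * Real.exp (-x^2/(4*v)) := by
  have ht : 0 ≤ x^2/(4*v) := by positivity
  have key := texp_sq (x^2/(4*v)) ht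
  -- x^4 = 16 v^2 (x^2/(4v))^2
  have hx4 : x^4 = 16 * v^2 * (x^2/(4*v))^2 := by field_simp; ring
  have hsplit : Real.exp (-x^2 / (2*v)) = Real.exp (-x^2/(4*v)) * Real.exp (-x^2/(4*v)) := by
    rw [← Real.exp_add]; congr 1; field_simp; ring
  have hinv : Real.exp (x^2/(4*v)) * Real.exp (-x^2/(4*v)) = 1 := by
    rw [← Real.exp_add]; ring_nf; exact Real.exp_zero
  have hpos := Real.exp_pos (-x^2/(4*v))
  calc x^4 * Real.exp (-x^2 / (2*v))
      = (16 * v^2 * (x^2/(4*v))^2) * (Real.exp (-x^2/(4*v)) * Real.exp (-x^2/(4*v))) := by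
        rw [hx4, hsplit]
    _ ≤ (16 * v^2 * (4 * Real.exp (x^2/(4*v)))) * (Real.exp (-x^2/(4*v)) * Real.exp (-x^2/(4*v))) := by
        apply mul_le_mul_of_nonneg_right _ (by positivity)
        apply mul_le_mul_of_nonneg_left key (by positivity)
    _ = 64 * v^2 * ((Real.exp (x^2/(4*v)) * Real.exp (-x^2/(4*v))) * Real.exp (-x^2/(4*v))) := by ring
    _ = 64 * v^2 * Real.exp (-x^2/(4*v)) := by rw [hinv, one_mul]


lemma lintegral_x4_gaussian (v : ℝ≥0) :
    ∫⁻ x, ENNReal.ofReal (x^4) ∂(gaussianReal 0 v) ≤ ENNReal.ofReal (91 * (v:ℝ)^2) := by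
  rcases eq_or_ne v 0 with rfl | hv
  · rw [gaussianReal_zero_var, lintegral_dirac' _ (by measurability)]
    simp
  · have hvpos : (0:ℝ) < v := by exact_mod_cast hv.bot_lt
    rw [gaussianReal_of_var_ne_zero _ hv,
      lintegral_withDensity_eq_lintegral_mul _ (measurable_gaussianPDF 0 v) (by measurability)]
    have hb : (0:ℝ) < 1/(4*v) := by positivity
    have hpt : ∀ x : ℝ, (gaussianPDF 0 v x * ENNReal.ofReal (x^4) : ℝ≥0∞)
        ≤ ENNReal.ofReal ((√(2 * π * v))⁻¹ * (64 * (v:ℝ)^2) * Real.exp (-(1/(4*v)) * x^2)) := by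
      intro x
      rw [gaussianPDF, ← ENNReal.ofReal_mul (gaussianPDFReal_nonneg 0 v x)]
      apply ENNReal.ofReal_le_ofReal
      rw [gaussianPDFReal]
      have h1 : x^4 * Real.exp (-x^2 / (2*(v:ℝ))) ≤ 64 * (v:ℝ)^2 * Real.exp (-x^2/(4*v)) :=
        x4_exp_bound (v:ℝ) x hvpos
      have hinv : (0:ℝ) ≤ (√(2 * π * v))⁻¹ := by positivity
      have : (-(1/(4*(v:ℝ))) * x^2) = -x^2/(4*v) := by ring
      rw [this]
      calc (√(2 * π * ↑v))⁻¹ * rexp (-(x - 0) ^ 2 / (2 * ↑v)) * x ^ 4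
          = (√(2 * π * ↑v))⁻¹ * (x^4 * rexp (-x ^ 2 / (2 * ↑v))) := by ring_nf
        _ ≤ (√(2 * π * ↑v))⁻¹ * (64 * (v:ℝ)^2 * Real.exp (-x^2/(4*v))) := by
            exact mul_le_mul_of_nonneg_left h1 hinv
        _ = (√(2 * π * ↑v))⁻¹ * (64 * (v:ℝ)^2) * Real.exp (-x^2/(4*v)) := by ring
    calc ∫⁻ x, gaussianPDF 0 v x * ENNReal.ofReal (x^4)
        ≤ ∫⁻ x, ENNReal.ofReal ((√(2 * π * v))⁻¹ * (64 * (v:ℝ)^2) * Real.exp (-(1/(4*v)) * x^2)) :=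
          lintegral_mono hpt
      _ = ENNReal.ofReal ((√(2 * π * v))⁻¹ * (64 * (v:ℝ)^2) * ∫ x, Real.exp (-(1/(4*v)) * x^2)) := by
          rw [← ofReal_integral_eq_lintegral_ofReal
            (((integrable_exp_neg_mul_sq hb).const_mul _))
            (Filter.Eventually.of_forall fun x => by positivity),
            integral_const_mul]
      _ ≤ ENNReal.ofReal (91 * (v:ℝ)^2) := by
          apply ENNReal.ofReal_le_ofReal
          rw [integral_gaussian]
          have h27 : π / (1/(4*(v:ℝ))) = 2 * (2 * π * v) := by field_simp; ring
          have h2 : √(π / (1/(4*(v:ℝ)))) = √2 * √(2 * π * v) := by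
            rw [h27, Real.sqrt_mul (by norm_num)]
          rw [h2]
          have hs : (0:ℝ) < √(2 * π * v) := Real.sqrt_pos.mpr (by positivity)
          have hsqrt2 : √2 ≤ 91/64 := by
            nlinarith [Real.sq_sqrt (by norm_num : (0:ℝ) ≤ 2), Real.sqrt_nonneg 2]
          have : (√(2 * π * ↑v))⁻¹ * (64 * (v:ℝ)^2) * (√2 * √(2 * π * ↑v))
              = 64 * √2 * (v:ℝ)^2 * ((√(2 * π * ↑v))⁻¹ * √(2 * π * ↑v)) := by ring
          rw [this, inv_mul_cancel₀ hs.ne', mul_one]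
          nlinarith [sq_nonneg (v:ℝ), Real.sqrt_nonneg 2]


lemma gaussian_small (ε : ℝ) : gaussianReal 0 1 {x | |x| < ε} ≤ ENNReal.ofReal ε := by
  rcases le_or_gt ε 0 with hε | hε
  · have : {x : ℝ | |x| < ε} = ∅ := by
      ext x; simp only [Set.mem_setOf_eq, Set.mem_empty_iff_false, iff_false, not_lt]
      exact hε.trans (abs_nonneg x)
    simp [this]
  · have hset : {x : ℝ | |x| < ε} = Set.Ioo (-ε) ε := by ext x; simp [abs_lt]
    rw [hset, gaussianReal_of_var_ne_zero _ one_ne_zero, withDensity_apply _ measurableSet_Ioo]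
    have hpdf : ∀ x : ℝ, gaussianPDF 0 1 x ≤ ENNReal.ofReal (1/2) := by
      intro x
      apply ENNReal.ofReal_le_ofReal
      rw [gaussianPDFReal]
      have h1 : rexp (-(x - 0)^2 / (2 * ((1:ℝ≥0):ℝ))) ≤ 1 := by
        rw [Real.exp_le_one_iff]
        exact div_nonpos_of_nonpos_of_nonneg (neg_nonpos.mpr (sq_nonneg _)) (by norm_num)
      have h3 : (√(2 * π * ((1:ℝ≥0):ℝ)))⁻¹ ≤ 1/2 := by
        have hpi : (0:ℝ) < 2 * π * ((1:ℝ≥0):ℝ) := by have := Real.pi_pos; simp; positivity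
        rw [inv_le_comm₀ (Real.sqrt_pos.mpr hpi) (by norm_num),
          show (1/2:ℝ)⁻¹ = 2 by norm_num, Real.le_sqrt (by norm_num) hpi.le]
        -- goal: 2^2 ≤ 2*π*1
        have := Real.pi_gt_three
        norm_num; nlinarith
      calc (√(2 * π * ((1:ℝ≥0):ℝ)))⁻¹ * rexp (-(x - 0)^2 / (2 * ((1:ℝ≥0):ℝ)))
          ≤ (√(2 * π * ((1:ℝ≥0):ℝ)))⁻¹ * 1 := by
            exact mul_le_mul_of_nonneg_left h1 (by positivity)
        _ ≤ 1/2 := by rw [mul_one]; exact h3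
    calc ∫⁻ x in Set.Ioo (-ε) ε, gaussianPDF 0 1 x
        ≤ ∫⁻ _x in Set.Ioo (-ε) ε, ENNReal.ofReal (1/2) := lintegral_mono hpdf
      _ = ENNReal.ofReal (1/2) * volume (Set.Ioo (-ε) ε) := by rw [setLIntegral_const]
      _ = ENNReal.ofReal (1/2) * ENNReal.ofReal (ε - -ε) := by rw [Real.volume_Ioo]
      _ ≤ ENNReal.ofReal ε := by
          rw [← ENNReal.ofReal_mul (by norm_num)]
          apply ENNReal.ofReal_le_ofReal; linarith


noncomputable def Ustep (f : ℝ → ℝ) (n : ℕ) : ℝ :=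
  Real.sqrt (Real.sqrt (∑ k ∈ Finset.range (2^n), (f (((k:ℝ)+1)/2^n) - f ((k:ℝ)/2^n))^4))

lemma Ustep_nonneg (f : ℝ → ℝ) (n : ℕ) : 0 ≤ Ustep f n := Real.sqrt_nonneg _

lemma abs_le_Ustep (f : ℝ → ℝ) (n k : ℕ) (hk : k < 2^n) :
    |f (((k:ℝ)+1)/2^n) - f ((k:ℝ)/2^n)| ≤ Ustep f n := by
  set a := f (((k:ℝ)+1)/2^n) - f ((k:ℝ)/2^n) with ha
  have h1 : a^4 ≤ ∑ k ∈ Finset.range (2^n), (f (((k:ℝ)+1)/2^n) - f ((k:ℝ)/2^n))^4 := by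
    exact Finset.single_le_sum (f := fun k : ℕ => (f (((k:ℝ)+1)/2^n) - f ((k:ℝ)/2^n))^4)
      (fun i _ => by positivity) (Finset.mem_range.mpr hk)
  have h2 : a^2 ≤ Real.sqrt (∑ k ∈ Finset.range (2^n), (f (((k:ℝ)+1)/2^n) - f ((k:ℝ)/2^n))^4) := by
    have : a^2 = Real.sqrt (a^4) := by
      rw [show a^4 = (a^2)^2 by ring, Real.sqrt_sq (sq_nonneg a)]
    rw [this]; exact Real.sqrt_le_sqrt h1
  calc |a| = Real.sqrt (a^2) := (Real.sqrt_sq_eq_abs a).symm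
    _ ≤ Ustep f n := Real.sqrt_le_sqrt h2

lemma dyadic_bound (f : ℝ → ℝ) (hf0 : f 0 = 0) :
    ∀ N (j : ℕ), j ≤ 2^N → |f ((j:ℝ)/2^N)| ≤ ∑ n ∈ Finset.range (N+1), Ustep f n := by
  intro N
  induction N with
  | zero =>
    intro j hj
    interval_cases j
    · have h0 : ((0:ℕ):ℝ)/2^(0:ℕ) = 0 := by norm_num
      rw [h0, hf0, abs_zero]
      exact Finset.sum_nonneg fun n _ => Ustep_nonneg f n
    · have := abs_le_Ustep f 0 0 (by norm_num)
      simpa [hf0] using this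
  | succ N ih =>
    intro j hj
    rcases Nat.even_or_odd j with ⟨j', hj'⟩ | ⟨j', hj'⟩
    · -- j = 2 j'
      have hj'le : j' ≤ 2^N := by omega
      have hcast : (j:ℝ)/2^(N+1) = (j':ℝ)/2^N := by
        subst hj'; push_cast; ring
      rw [hcast, Finset.sum_range_succ]
      have := ih j' hj'le
      have hU := Ustep_nonneg f (N+1)
      linarith
    · -- j = 2 j' + 1
      have hj'le : j' ≤ 2^N := by omega
      have hklt : 2*j' < 2^(N+1) := by omega
      have hstep := abs_le_Ustep f (N+1) (2*j') hklt
      have hcast1 : ((2*j' : ℕ):ℝ)/2^(N+1) = (j':ℝ)/2^N := by push_cast; ring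
      have hcast2 : (((2*j' : ℕ):ℝ)+1)/2^(N+1) = (j:ℝ)/2^(N+1) := by
        subst hj'; push_cast; ring
      rw [hcast1, hcast2] at hstep
      have hih := ih j' hj'le
      rw [Finset.sum_range_succ]
      calc |f ((j:ℝ)/2^(N+1))|
          ≤ |f ((j:ℝ)/2^(N+1)) - f ((j':ℝ)/2^N)| + |f ((j':ℝ)/2^N)| := by
            have := abs_sub_abs_le_abs_sub (f ((j:ℝ)/2^(N+1))) (f ((j':ℝ)/2^N))
            have := abs_add_le (f ((j:ℝ)/2^(N+1)) - f ((j':ℝ)/2^N)) (f ((j':ℝ)/2^N))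
            simpa using this
        _ ≤ Ustep f (N+1) + ∑ n ∈ Finset.range (N+1), Ustep f n := add_le_add hstep hih
        _ = ∑ n ∈ Finset.range (N+1), Ustep f n + Ustep f (N+1) := by ring



lemma sqrt_sqrt_le (m e : ℝ) (hm : 0 ≤ m) (he : 0 < e) :
    Real.sqrt (Real.sqrt m) ≤ e + m * (1/e^3) := by
  rcases le_or_gt (Real.sqrt (Real.sqrt m)) e with h | h
  · have : 0 ≤ m * (1/e^3) := by positivity
    linarith
  · set s := Real.sqrt (Real.sqrt m) with hs
    have hs0 : 0 ≤ s := Real.sqrt_nonneg _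
    have hm4 : s^4 = m := by
      rw [hs, show ∀ x:ℝ, x^4 = (x^2)^2 from fun x => by ring,
        Real.sq_sqrt (Real.sqrt_nonneg m), Real.sq_sqrt hm]
    have : m * (1/e^3) ≥ s := by
      rw [← hm4]
      rw [ge_iff_le, ← sub_nonneg]
      have : s^4 * (1/e^3) - s = s * (s^3 - e^3)/e^3 := by field_simp
      rw [this]
      have h3 : e^3 ≤ s^3 := by nlinarith [sq_nonneg s, sq_nonneg e, sq_nonneg (s+e)]
      have h4 : 0 ≤ s * (s^3 - e^3) := mul_nonneg hs0 (by linarith)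
      positivity
    linarith

lemma lintegral_Ssum_lt_top {Ω : Type*} [MeasurableSpace Ω] (P : Measure Ω) [IsProbabilityMeasure P]
    (B : ℝ → Ω → ℝ) (hm : ∀ t, Measurable (B t))
    (hincr : ∀ s t : ℝ, P.map (fun ω => B t ω - B s ω) = gaussianReal 0 (Real.nnabs (t - s))) :
    ∫⁻ ω, ∑' n, ENNReal.ofReal (Ustep (fun t => B t ω) n) ∂P ≠ ∞ := by
  have msqrt := Real.continuous_sqrt.measurable
  set msum : ℕ → Ω → ℝ := fun n ω =>
    ∑ k ∈ Finset.range (2^n), (B (((k:ℝ)+1)/2^n) ω - B ((k:ℝ)/2^n) ω)^4 with hmsum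
  have hmsum_nonneg : ∀ n ω, 0 ≤ msum n ω := fun n ω =>
    Finset.sum_nonneg fun k _ => by positivity
  have hmsum_meas : ∀ n, Measurable (msum n) := fun n =>
    Finset.measurable_sum _ fun k _ => ((hm _).sub (hm _)).pow_const 4
  have hUeq : ∀ n ω, Ustep (fun t => B t ω) n = Real.sqrt (Real.sqrt (msum n ω)) := fun n ω => rfl
  have hU_meas : ∀ n, Measurable fun ω => ENNReal.ofReal (Ustep (fun t => B t ω) n) := by
    intro n
    simp only [hUeq]
    exact (msqrt.comp (msqrt.comp (hmsum_meas n))).ennreal_ofReal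
  -- increment bound
  have hinc : ∀ n (k : ℕ),
      ∫⁻ ω, ENNReal.ofReal ((B (((k:ℝ)+1)/2^n) ω - B ((k:ℝ)/2^n) ω)^4) ∂P
        ≤ ENNReal.ofReal (91 * ((1:ℝ)/2^n)^2) := by
    intro n k
    have hmapeq : ∫⁻ ω, ENNReal.ofReal ((B (((k:ℝ)+1)/2^n) ω - B ((k:ℝ)/2^n) ω)^4) ∂P
        = ∫⁻ x, ENNReal.ofReal (x^4) ∂(P.map (fun ω => B (((k:ℝ)+1)/2^n) ω - B ((k:ℝ)/2^n) ω)) :=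
      (lintegral_map ((measurable_id.pow_const 4).ennreal_ofReal) ((hm _).sub (hm _))).symm
    rw [hmapeq, hincr ((k:ℝ)/2^n) (((k:ℝ)+1)/2^n)]
    have hd : (((k:ℝ)+1)/2^n - (k:ℝ)/2^n) = 1/2^n := by ring
    rw [hd]
    refine (lintegral_x4_gaussian _).trans ?_
    apply ENNReal.ofReal_le_ofReal
    have : ((Real.nnabs ((1:ℝ)/2^n)):ℝ) = 1/2^n := by
      rw [Real.coe_nnabs, abs_of_nonneg (by positivity)]
    rw [this]
  -- msum integral bound
  have hmsumint : ∀ n, ∫⁻ ω, ENNReal.ofReal (msum n ω) ∂P ≤ ENNReal.ofReal (91 / 2^n) := by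
    intro n
    have hsplit : ∀ ω, ENNReal.ofReal (msum n ω)
        = ∑ k ∈ Finset.range (2^n), ENNReal.ofReal ((B (((k:ℝ)+1)/2^n) ω - B ((k:ℝ)/2^n) ω)^4) :=
      fun ω => ENNReal.ofReal_sum_of_nonneg fun k _ => by positivity
    calc ∫⁻ ω, ENNReal.ofReal (msum n ω) ∂P
        = ∑ k ∈ Finset.range (2^n),
            ∫⁻ ω, ENNReal.ofReal ((B (((k:ℝ)+1)/2^n) ω - B ((k:ℝ)/2^n) ω)^4) ∂P := by
          simp_rw [hsplit]
          exact lintegral_finset_sum _ fun k _ => (((hm _).sub (hm _)).pow_const 4).ennreal_ofReal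
      _ ≤ ∑ _k ∈ Finset.range (2^n), ENNReal.ofReal (91 * ((1:ℝ)/2^n)^2) :=
          Finset.sum_le_sum fun k _ => hinc n k
      _ = (2^n : ℕ) * ENNReal.ofReal (91 * ((1:ℝ)/2^n)^2) := by
          rw [Finset.sum_const, Finset.card_range, nsmul_eq_mul]
      _ = ENNReal.ofReal (((2^n : ℕ) : ℝ) * (91 * ((1:ℝ)/2^n)^2)) := by
          rw [← ENNReal.ofReal_natCast (2^n), ← ENNReal.ofReal_mul (by positivity)]
      _ = ENNReal.ofReal (91 / 2^n) := by
          congr 1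
          field_simp
          ring
          norm_num
  -- per-n bound
  have key : ∀ n, ∫⁻ ω, ENNReal.ofReal (Ustep (fun t => B t ω) n) ∂P
      ≤ ENNReal.ofReal ((17/20:ℝ)^n + 91 * (4000/4913:ℝ)^n) := by
    intro n
    have he0 : (0:ℝ) < (17/20:ℝ)^n := by positivity
    have hpt : ∀ ω, ENNReal.ofReal (Ustep (fun t => B t ω) n)
        ≤ ENNReal.ofReal ((17/20:ℝ)^n)
          + ENNReal.ofReal (msum n ω) * ENNReal.ofReal (1/((17/20:ℝ)^n)^3) := by
      intro ω
      rw [← ENNReal.ofReal_mul (hmsum_nonneg n ω),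
        ← ENNReal.ofReal_add he0.le (by positivity)]
      exact ENNReal.ofReal_le_ofReal (by rw [hUeq]; exact sqrt_sqrt_le _ _ (hmsum_nonneg n ω) he0)
    calc ∫⁻ ω, ENNReal.ofReal (Ustep (fun t => B t ω) n) ∂P
        ≤ ∫⁻ ω, (ENNReal.ofReal ((17/20:ℝ)^n)
            + ENNReal.ofReal (msum n ω) * ENNReal.ofReal (1/((17/20:ℝ)^n)^3)) ∂P :=
          lintegral_mono hpt
      _ = ENNReal.ofReal ((17/20:ℝ)^n)
            + (∫⁻ ω, ENNReal.ofReal (msum n ω) ∂P) * ENNReal.ofReal (1/((17/20:ℝ)^n)^3) := by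
          rw [lintegral_add_left measurable_const, lintegral_const, measure_univ, mul_one,
            lintegral_mul_const _ ((hmsum_meas n).ennreal_ofReal)]
      _ ≤ ENNReal.ofReal ((17/20:ℝ)^n)
            + ENNReal.ofReal (91 / 2^n) * ENNReal.ofReal (1/((17/20:ℝ)^n)^3) := by
          gcongr
          exact hmsumint n
      _ = ENNReal.ofReal ((17/20:ℝ)^n + 91 * (4000/4913:ℝ)^n) := by
          rw [← ENNReal.ofReal_mul (by positivity), ← ENNReal.ofReal_add he0.le (by positivity)]
          congr 1
          have h3 : (((17/20:ℝ))^n)^3 = ((17/20:ℝ)^3)^n := by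
            rw [← pow_mul, ← pow_mul, Nat.mul_comm]
          rw [h3]
          have h4 : (91:ℝ) / 2^n * (1/((17/20:ℝ)^3)^n) = 91 * (4000/4913:ℝ)^n := by
            rw [div_mul_eq_mul_div, mul_one_div, div_div, ← mul_pow, div_eq_mul_inv, ← inv_pow]
            norm_num
          linarith [h4]
  -- conclude
  have hsummable : Summable (fun n => (17/20:ℝ)^n + 91 * (4000/4913:ℝ)^n) := by
    apply Summable.add
    · exact summable_geometric_of_lt_one (by norm_num) (by norm_num)
    · exact (summable_geometric_of_lt_one (by norm_num) (by norm_num)).mul_left 91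
  apply ne_of_lt
  calc ∫⁻ ω, ∑' n, ENNReal.ofReal (Ustep (fun t => B t ω) n) ∂P
      = ∑' n, ∫⁻ ω, ENNReal.ofReal (Ustep (fun t => B t ω) n) ∂P :=
        lintegral_tsum fun n => (hU_meas n).aemeasurable
    _ ≤ ∑' n, ENNReal.ofReal ((17/20:ℝ)^n + 91 * (4000/4913:ℝ)^n) := ENNReal.tsum_le_tsum key
    _ = ENNReal.ofReal (∑' n, ((17/20:ℝ)^n + 91 * (4000/4913:ℝ)^n)) :=
        (ENNReal.ofReal_tsum_of_nonneg (fun n => by positivity) hsummable).symm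
    _ < ∞ := ENNReal.ofReal_lt_top



lemma path_bound (f : ℝ → ℝ) (hf0 : f 0 = 0) (hc : Continuous f)
    (hfin : (∑' n, ENNReal.ofReal (Ustep f n)) ≠ ∞) :
    ∀ t ∈ Set.Icc (0:ℝ) 1, |f t| ≤ (∑' n, ENNReal.ofReal (Ustep f n)).toReal := by
  set S := ∑' n, ENNReal.ofReal (Ustep f n) with hS
  have hdy : ∀ N (j : ℕ), j ≤ 2^N → |f ((j:ℝ)/2^N)| ≤ S.toReal := by
    intro N j hj
    refine (dyadic_bound f hf0 N j hj).trans ?_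
    have h1 : ENNReal.ofReal (∑ n ∈ Finset.range (N+1), Ustep f n)
        = ∑ n ∈ Finset.range (N+1), ENNReal.ofReal (Ustep f n) :=
      ENNReal.ofReal_sum_of_nonneg fun n _ => Ustep_nonneg f n
    have h2 : ENNReal.ofReal (∑ n ∈ Finset.range (N+1), Ustep f n) ≤ S := by
      rw [h1]; exact ENNReal.sum_le_tsum _
    have h3 := ENNReal.toReal_mono hfin h2
    rwa [ENNReal.toReal_ofReal (Finset.sum_nonneg fun n _ => Ustep_nonneg f n)] at h3
  intro t ht
  obtain ⟨ht0, ht1⟩ := ht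
  set tN : ℕ → ℝ := fun N => ((⌊t * 2^N⌋₊ : ℕ) : ℝ)/2^N with htN
  have hjle : ∀ N, ⌊t * 2^N⌋₊ ≤ 2^N := by
    intro N
    have : t * 2^N ≤ ((2^N : ℕ) : ℝ) := by
      push_cast
      nlinarith [pow_pos (show (0:ℝ) < 2 by norm_num) N]
    exact (Nat.floor_le_floor this).trans_eq (Nat.floor_natCast _)
  have hbd : ∀ N, |f (tN N)| ≤ S.toReal := fun N => hdy N _ (hjle N)
  have hdist : ∀ N, |tN N - t| ≤ (1/2:ℝ)^N := by
    intro N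
    have hp : (0:ℝ) < 2^N := by positivity
    have hfl : (⌊t * 2^N⌋₊ : ℝ) ≤ t * 2^N := Nat.floor_le (by positivity)
    have hfl2 : t * 2^N - 1 < (⌊t * 2^N⌋₊ : ℝ) := by
      have := Nat.sub_one_lt_floor (t * 2^N)
      linarith
    have h1 : tN N - t = ((⌊t * 2^N⌋₊ : ℝ) - t * 2^N)/2^N := by
      rw [htN]; field_simp
    have h2 : |(⌊t * 2^N⌋₊ : ℝ) - t * 2^N| ≤ 1 := abs_le.mpr ⟨by linarith, by linarith⟩
    calc |tN N - t| = |(⌊t * 2^N⌋₊ : ℝ) - t * 2^N| / 2^N := by rw [h1, abs_div, abs_of_pos hp]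
      _ ≤ 1 / 2^N := by gcongr
      _ = (1/2:ℝ)^N := by rw [div_pow, one_pow]
  have htt : Tendsto tN atTop (nhds t) := by
    rw [tendsto_iff_dist_tendsto_zero]
    refine squeeze_zero (g := fun N => (1/2:ℝ)^N) (fun N => dist_nonneg)
      (fun N => by rw [Real.dist_eq]; exact hdist N) ?_
    exact tendsto_pow_atTop_nhds_zero_of_lt_one (by norm_num) (by norm_num)
  have hft : Tendsto (fun N => |f (tN N)|) atTop (nhds |f t|) :=
    (continuous_abs.tendsto _).comp ((hc.tendsto t).comp htt)
  exact le_of_tendsto hft (Eventually.of_forall hbd)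



/-- A (two-sided) standard Brownian motion: continuous paths, `B 0 = 0`, Gaussian
increments of variance `|t - s|` and independent increments over disjoint intervals. -/
structure IsTwoSidedBM {Ω : Type*} [MeasurableSpace Ω] (B : ℝ → Ω → ℝ)
    (P : Measure Ω) : Prop where
  measurable : ∀ t, Measurable (B t)
  init : ∀ᵐ ω ∂P, B 0 ω = 0
  cont : ∀ᵐ ω ∂P, Continuous fun t => B t ω
  incr : ∀ s t : ℝ, P.map (fun ω => B t ω - B s ω) = gaussianReal 0 (Real.nnabs (t - s))
  indep_incr : ∀ (n : ℕ) (t : Fin (n + 1) → ℝ), Monotone t →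
    iIndepFun
      (fun i : Fin n => fun ω => B (t i.succ) ω - B (t i.castSucc) ω) P

/-- If `D₁, D₂, …` are i.i.d. copies of the oscillation of Brownian motion on `[0,1]`,
then the infinite product `∏_{i=1}^∞ D_i^{2^{-(i-1)}}` converges a.s. in `(0,∞)`. -/
theorem stmt13 {Ω : Type*} [MeasurableSpace Ω] (P : Measure Ω) [IsProbabilityMeasure P]
    (B : ℝ → Ω → ℝ) (hB : IsTwoSidedBM B P)
    {Ω' : Type*} [MeasurableSpace Ω'] (P' : Measure Ω') [IsProbabilityMeasure P']
    (D : ℕ → Ω' → ℝ) (hDm : ∀ i, Measurable (D i))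
    (hiid : ProbabilityTheory.iIndepFun D P')
    (hcopy : ∀ i, ProbabilityTheory.IdentDistrib (D i)
      (fun ω => ⨆ q : Set.Icc (0:ℝ) 1 × Set.Icc (0:ℝ) 1, |B (q.1 : ℝ) ω - B (q.2 : ℝ) ω|)
      P' P) :
    ∀ᵐ ω ∂P', ∃ l : ℝ, 0 < l ∧
      Filter.Tendsto (fun n => ∏ i ∈ Finset.range n, (D (i + 1) ω) ^ ((2:ℝ) ^ (-(i:ℝ))))
        Filter.atTop (nhds l) := by
  haveI : Nonempty (Set.Icc (0:ℝ) 1) := ⟨⟨0, le_refl 0, by norm_num⟩⟩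
  set X : Ω → ℝ :=
    fun ω => ⨆ q : Set.Icc (0:ℝ) 1 × Set.Icc (0:ℝ) 1, |B (q.1 : ℝ) ω - B (q.2 : ℝ) ω| with hX
  set S : Ω → ℝ≥0∞ := fun ω => ∑' n, ENNReal.ofReal (Ustep (fun t => B t ω) n) with hSdef
  have msqrt := Real.continuous_sqrt.measurable
  have hS_meas : Measurable S := by
    apply Measurable.ennreal_tsum
    intro n
    exact (msqrt.comp (msqrt.comp (Finset.measurable_sum _
      fun k _ => ((hB.measurable _).sub (hB.measurable _)).pow_const 4))).ennreal_ofReal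
  have hSint : ∫⁻ ω, S ω ∂P ≠ ∞ := lintegral_Ssum_lt_top P B hB.measurable hB.incr
  have hSfin : ∀ᵐ ω ∂P, S ω < ∞ := ae_lt_top hS_meas hSint
  -- a.e. bounds relating X to S and to |B1 - B0|
  have hae : ∀ᵐ ω ∂P, X ω ≤ 2 * (S ω).toReal ∧ |B 1 ω - B 0 ω| ≤ X ω := by
    filter_upwards [hB.init, hB.cont, hSfin] with ω h0 hc hfin
    have hpb := path_bound (fun t => B t ω) h0 hc hfin.ne
    have hterm : ∀ q : Set.Icc (0:ℝ) 1 × Set.Icc (0:ℝ) 1,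
        |B (q.1 : ℝ) ω - B (q.2 : ℝ) ω| ≤ 2 * (S ω).toReal := by
      intro q
      have h1 := hpb (q.1 : ℝ) q.1.2
      have h2 := hpb (q.2 : ℝ) q.2.2
      have := abs_sub (B (q.1 : ℝ) ω) (B (q.2 : ℝ) ω)
      calc |B (q.1 : ℝ) ω - B (q.2 : ℝ) ω| ≤ |B (q.1 : ℝ) ω| + |B (q.2 : ℝ) ω| := abs_sub _ _
        _ ≤ 2 * (S ω).toReal := by linarith
    constructor
    · exact ciSup_le hterm
    · have hbdd : BddAbove (Set.range fun q : Set.Icc (0:ℝ) 1 × Set.Icc (0:ℝ) 1 =>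
          |B (q.1 : ℝ) ω - B (q.2 : ℝ) ω|) := ⟨2 * (S ω).toReal, by rintro x ⟨q, rfl⟩; exact hterm q⟩
      have := le_ciSup hbdd (⟨⟨1, by norm_num, le_refl 1⟩, ⟨0, le_refl 0, by norm_num⟩⟩ :
        Set.Icc (0:ℝ) 1 × Set.Icc (0:ℝ) 1)
      simpa using this
  -- upper tail bound
  have hup : ∀ M : ℝ, 0 < M → P {ω | M < X ω} ≤ 2 * (∫⁻ ω, S ω ∂P) / ENNReal.ofReal M := by
    intro M hM
    have hsub : {ω | M < X ω} ≤ᵐ[P] {ω | ENNReal.ofReal M ≤ 2 * S ω} := by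
      filter_upwards [hae] with ω h hmem
      replace hmem : M < X ω := hmem
      show ENNReal.ofReal M ≤ 2 * S ω
      rcases eq_or_ne (S ω) ∞ with h' | h'
      · rw [h', ENNReal.mul_top (by norm_num)]; exact le_top
      · have : M ≤ 2 * (S ω).toReal := le_of_lt (lt_of_lt_of_le hmem h.1)
        calc ENNReal.ofReal M ≤ ENNReal.ofReal (2 * (S ω).toReal) := ENNReal.ofReal_le_ofReal this
          _ = 2 * ENNReal.ofReal ((S ω).toReal) := by
              rw [ENNReal.ofReal_mul (by norm_num)]; norm_num
          _ = 2 * S ω := by rw [ENNReal.ofReal_toReal h']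
    calc P {ω | M < X ω} ≤ P {ω | ENNReal.ofReal M ≤ 2 * S ω} := measure_mono_ae hsub
      _ ≤ (∫⁻ ω, 2 * S ω ∂P) / ENNReal.ofReal M :=
          meas_ge_le_lintegral_div ((hS_meas.const_mul 2).aemeasurable)
            (by simp [hM, ENNReal.ofReal_pos]) ENNReal.ofReal_ne_top
      _ = 2 * (∫⁻ ω, S ω ∂P) / ENNReal.ofReal M := by rw [lintegral_const_mul 2 hS_meas]
  -- lower tail bound
  have hlow : ∀ ε : ℝ, P {ω | X ω < ε} ≤ ENNReal.ofReal ε := by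
    intro ε
    have hsub : {ω | X ω < ε} ≤ᵐ[P] {ω | |B 1 ω - B 0 ω| < ε} := by
      filter_upwards [hae] with ω h hmem
      exact lt_of_le_of_lt h.2 hmem
    have hmeasset : MeasurableSet {x : ℝ | |x| < ε} :=
      measurableSet_lt (continuous_abs.measurable) measurable_const
    calc P {ω | X ω < ε} ≤ P {ω | |B 1 ω - B 0 ω| < ε} := measure_mono_ae hsub
      _ = (P.map (fun ω => B 1 ω - B 0 ω)) {x | |x| < ε} := by
          rw [Measure.map_apply (f := fun ω => B 1 ω - B 0 ω) ((hB.measurable 1).sub (hB.measurable 0)) hmeasset]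
          rfl
      _ ≤ ENNReal.ofReal ε := by
          rw [hB.incr 0 1]
          have : Real.nnabs ((1:ℝ) - 0) = 1 := by
            simp
          rw [this]
          exact gaussian_small ε
  -- transfer to Ω'
  have htrans : ∀ (j : ℕ) (s : Set ℝ), MeasurableSet s → P' (D j ⁻¹' s) = P (X ⁻¹' s) :=
    fun j s hs => (hcopy j).measure_mem_eq hs
  -- positivity a.s.
  have hpos : ∀ᵐ ω ∂P', ∀ i, 0 < D i ω := by
    rw [ae_all_iff]
    intro i
    have h0 : P' {ω | D i ω ≤ 0} = 0 := by
      have heq : {ω | D i ω ≤ 0} = D i ⁻¹' (Set.Iic 0) := rfl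
      rw [heq, htrans i _ measurableSet_Iic]
      have hle : ∀ n : ℕ, P (X ⁻¹' Set.Iic 0) ≤ ENNReal.ofReal (1/((n:ℝ)+1)) := by
        intro n
        refine le_trans (measure_mono ?_) (hlow (1/((n:ℝ)+1)))
        intro ω hω
        simp only [Set.mem_preimage, Set.mem_Iic] at hω
        have : (0:ℝ) < 1/((n:ℝ)+1) := by positivity
        exact lt_of_le_of_lt hω this
      have htend : Tendsto (fun n : ℕ => ENNReal.ofReal (1/((n:ℝ)+1))) atTop (nhds 0) := by
        rw [show (0:ℝ≥0∞) = ENNReal.ofReal 0 by simp]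
        exact ENNReal.tendsto_ofReal tendsto_one_div_add_atTop_nhds_zero_nat
      have := ge_of_tendsto htend (Eventually.of_forall hle)
      exact le_antisymm this (zero_le)
    rw [ae_iff]
    convert h0 using 2
    ext ω
    simp [not_lt]
  -- Borel-Cantelli
  set A : ℕ → Set Ω' := fun i =>
    D (i+1) ⁻¹' (Set.Iio (Real.exp (-((i:ℝ)+1)))) ∪ D (i+1) ⁻¹' (Set.Ioi (((i:ℝ)+1)^2)) with hA
  have hAsum : ∑' i, P' (A i) ≠ ∞ := by
    have hbound : ∀ i, P' (A i) ≤ ENNReal.ofReal (Real.exp (-((i:ℝ)+1)))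
        + 2 * (∫⁻ ω, S ω ∂P) * ENNReal.ofReal (1/((i:ℝ)+1)^2) := by
      intro i
      refine (measure_union_le _ _).trans ?_
      gcongr
      · rw [htrans _ _ measurableSet_Iio]
        refine le_trans (measure_mono (fun ω hω => hω)) (hlow _)
      · rw [htrans _ _ measurableSet_Ioi]
        have h2 := hup (((i:ℝ)+1)^2) (by positivity)
        refine le_trans (le_trans (measure_mono (fun ω hω => hω)) h2) (le_of_eq ?_)
        rw [ENNReal.div_eq_inv_mul, ← ENNReal.ofReal_inv_of_pos (by positivity), mul_comm, one_div]
    refine ne_top_of_le_ne_top ?_ (ENNReal.tsum_le_tsum hbound)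
    rw [ENNReal.tsum_add]
    apply ENNReal.add_ne_top.mpr
    constructor
    · have hsumm : Summable (fun i : ℕ => Real.exp (-((i:ℝ)+1))) := by
        have : ∀ i : ℕ, Real.exp (-((i:ℝ)+1)) = Real.exp (-1) * (Real.exp (-1))^i := by
          intro i
          rw [← Real.exp_nat_mul]
          rw [← Real.exp_add]
          congr 1
          push_cast
          ring
        simp_rw [this]
        exact (summable_geometric_of_lt_one (Real.exp_nonneg _)
          (Real.exp_lt_one_iff.mpr (by norm_num))).mul_left _
      rw [← ENNReal.ofReal_tsum_of_nonneg (fun i => (Real.exp_pos _).le) hsumm]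
      exact ENNReal.ofReal_ne_top
    · rw [ENNReal.tsum_mul_left]
      apply ENNReal.mul_ne_top
      · exact ENNReal.mul_ne_top (by norm_num) hSint
      · have hsumm : Summable (fun i : ℕ => 1/((i:ℝ)+1)^2) := by
          have h1 := (Real.summable_one_div_nat_pow (p := 2)).mpr (by norm_num)
          have h2 := (summable_nat_add_iff (f := fun n : ℕ => 1/(n:ℝ)^2) 1).mpr h1
          exact h2.congr (fun n => by push_cast; ring)
        rw [← ENNReal.ofReal_tsum_of_nonneg (fun i => by positivity) hsumm]
        exact ENNReal.ofReal_ne_top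
  -- conclusion
  filter_upwards [MeasureTheory.ae_eventually_notMem hAsum, hpos] with ω hev hposω
  set g : ℕ → ℝ := fun i => (2:ℝ)^(-(i:ℝ)) * Real.log (D (i+1) ω) with hg
  have hcpow : ∀ i : ℕ, (2:ℝ)^(-(i:ℝ)) = (1/2:ℝ)^i := by
    intro i
    rw [Real.rpow_neg (by norm_num), Real.rpow_natCast, one_div, inv_pow]
  have hgsummable : Summable g := by
    apply Summable.of_norm_bounded_eventually
      (g := fun i : ℕ => 3*((i:ℝ) * (1/2:ℝ)^i) + 3*(1/2:ℝ)^i)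
    · apply Summable.add
      · apply Summable.mul_left
        have := summable_pow_mul_geometric_of_norm_lt_one (R := ℝ) 1 (r := (1/2:ℝ)) (by norm_num)
        simpa using this
      · exact (summable_geometric_of_lt_one (by norm_num) (by norm_num)).mul_left 3
    · rw [Nat.cofinite_eq_atTop]
      filter_upwards [hev] with i hi
      simp only [hA, Set.mem_union, Set.mem_preimage, Set.mem_Iio, Set.mem_Ioi, not_or,
        not_lt] at hi
      obtain ⟨hlo, hhi⟩ := hi
      have hd : 0 < D (i+1) ω := hposω (i+1)
      have hlog_up : Real.log (D (i+1) ω) ≤ 2*((i:ℝ)+1) := by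
        calc Real.log (D (i+1) ω) ≤ Real.log (((i:ℝ)+1)^2) :=
              Real.log_le_log hd hhi
          _ = 2 * Real.log ((i:ℝ)+1) := by
              rw [show (((i:ℝ)+1)^2) = ((i:ℝ)+1)^(2:ℕ) from rfl, Real.log_pow]; push_cast; ring
          _ ≤ 2*((i:ℝ)+1) := by
              have := Real.log_le_sub_one_of_pos (show (0:ℝ) < (i:ℝ)+1 by positivity)
              linarith
      have hlog_lo : -((i:ℝ)+1) ≤ Real.log (D (i+1) ω) := by
        calc -((i:ℝ)+1) = Real.log (Real.exp (-((i:ℝ)+1))) := (Real.log_exp _).symm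
          _ ≤ Real.log (D (i+1) ω) := Real.log_le_log (Real.exp_pos _) hlo
      have habs : |Real.log (D (i+1) ω)| ≤ 3*((i:ℝ)+1) := by
        rw [abs_le]; constructor <;> nlinarith [Nat.cast_nonneg (α := ℝ) i]
      have hnorm : ‖g i‖ = (1/2:ℝ)^i * |Real.log (D (i+1) ω)| := by
        rw [hg]
        simp only [norm_mul, Real.norm_eq_abs, hcpow]
        congr 1
        rw [abs_of_nonneg (by positivity)]
      rw [hnorm]
      calc (1/2:ℝ)^i * |Real.log (D (i+1) ω)| ≤ (1/2:ℝ)^i * (3*((i:ℝ)+1)) := by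
            apply mul_le_mul_of_nonneg_left habs (by positivity)
        _ = 3*((i:ℝ) * (1/2:ℝ)^i) + 3*(1/2:ℝ)^i := by ring
  have hprod_eq : ∀ n, ∏ i ∈ Finset.range n, (D (i + 1) ω) ^ ((2:ℝ) ^ (-(i:ℝ)))
      = Real.exp (∑ i ∈ Finset.range n, g i) := by
    intro n
    rw [Real.exp_sum]
    apply Finset.prod_congr rfl
    intro i _
    rw [hg, Real.rpow_def_of_pos (hposω (i+1)), mul_comm]
  refine ⟨Real.exp (∑' i, g i), Real.exp_pos _, ?_⟩
  have htends : Tendsto (fun n => ∑ i ∈ Finset.range n, g i) atTop (nhds (∑' i, g i)) :=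
    hgsummable.hasSum.tendsto_sum_nat
  have := (Real.continuous_exp.tendsto _).comp htends
  convert this using 1
  funext n
  exact hprod_eq n
end
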